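/- Let (η_k)_{k≥1} be an i.i.d. sequence of integrable real-valued random variables with E[η_1] > 0, let α ≥ 1, and suppose E[(max(−η_1, 0))^α] < ∞. Let Γ > 0 and 0 ≤ e ≤ Γ, and let E_k(Γ) be the finite-buffer process started from e and driven by (η_k). Then the hitting time τ(Γ) = inf{k ≥ 0 : E_k(Γ) = Γ} satisfies E[τ(Γ)^α] < ∞. -/

import Mathlib

open MeasureTheory ProbabilityTheory
open scoped ENNReal

def bufferProc (Γ e : ℝ) (η : ℕ → ℝ) : ℕ → ℝ
  | 0 => e
  | k + 1 => min Γ (max 0 (bufferProc Γ e η k + η k))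

noncomputable def tauFin (Γ e : ℝ) (η : ℕ → ℝ) : ℕ∞ :=
  sInf ((↑) '' {k : ℕ | bufferProc Γ e η k = Γ})

section Det
variable {Γ e : ℝ} {η : ℕ → ℝ}

lemma buf_nonneg (hΓ : 0 ≤ Γ) (he : 0 ≤ e) : ∀ k, 0 ≤ bufferProc Γ e η k
  | 0 => he
  | k + 1 => le_min hΓ (le_max_left _ _)

lemma buf_le (heΓ : e ≤ Γ) : ∀ k, bufferProc Γ e η k ≤ Γ
  | 0 => heΓ
  | _ + 1 => min_le_left _ _

lemma buf_congr {η' : ℕ → ℝ} : ∀ m, (∀ i < m, η i = η' i) →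
    bufferProc Γ e η m = bufferProc Γ e η' m
  | 0, _ => rfl
  | m + 1, h => by
      simp only [bufferProc, buf_congr m (fun i hi => h i (Nat.lt_succ_of_lt hi)),
        h m (Nat.lt_succ_self m)]

lemma buf_ge_add_sum {l : ℕ} : ∀ r, l ≤ r → (∀ m, l < m → m ≤ r → bufferProc Γ e η m ≠ Γ) →
    bufferProc Γ e η l + ∑ i ∈ Finset.Ico l r, η i ≤ bufferProc Γ e η r := by
  intro r
  induction r with
  | zero => intro hl _; simp [Nat.le_zero.mp hl]
  | succ r ih =>
    intro hl hne
    rcases Nat.lt_or_ge l (r+1) with hlt | hge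
    · have hlr : l ≤ r := Nat.lt_succ_iff.mp hlt
      have h1 : bufferProc Γ e η l + ∑ i ∈ Finset.Ico l r, η i ≤ bufferProc Γ e η r :=
        ih hlr (fun m hm hm' => hne m hm (hm'.trans (Nat.le_succ r)))
      have h2 : bufferProc Γ e η (r+1) ≠ Γ := hne (r+1) hlt le_rfl
      have h3 : bufferProc Γ e η (r+1) = max 0 (bufferProc Γ e η r + η r) := by
        rcases min_cases Γ (max 0 (bufferProc Γ e η r + η r)) with ⟨h, _⟩ | ⟨h, _⟩
        · exact absurd h h2
        · exact h
      rw [Finset.sum_Ico_succ_top hlr, ← add_assoc]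
      calc bufferProc Γ e η l + (∑ i ∈ Finset.Ico l r, η i) + η r
          ≤ bufferProc Γ e η r + η r := by linarith
        _ ≤ max 0 (bufferProc Γ e η r + η r) := le_max_right _ _
        _ = bufferProc Γ e η (r+1) := h3.symm
    · have : l = r + 1 := le_antisymm hl hge
      simp [this]

lemma tau_gt_iff {m : ℕ} : (m : ℕ∞) < tauFin Γ e η ↔ ∀ i ≤ m, bufferProc Γ e η i ≠ Γ := by
  rw [tauFin]
  constructor
  · intro h i hi hΓi
    have h2 : sInf ((↑) '' {k : ℕ | bufferProc Γ e η k = Γ}) ≤ (i : ℕ∞) :=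
      sInf_le ⟨i, hΓi, rfl⟩
    exact absurd (Nat.cast_le.mpr hi) (not_le.mpr (lt_of_lt_of_le h h2))
  · intro h
    have : ((m + 1 : ℕ) : ℕ∞) ≤ sInf ((↑) '' {k : ℕ | bufferProc Γ e η k = Γ}) := by
      apply le_sInf
      rintro b ⟨i, hΓi, rfl⟩
      by_contra hc
      have : i ≤ m := by
        have := Nat.cast_lt.mp (not_le.mp hc)
        omega
      exact h i this hΓi
    exact lt_of_lt_of_le (Nat.cast_lt.mpr (Nat.lt_succ_self m)) this

/-- Key deterministic lemma: if hitting time exceeds `k*N`, each block sum is `< Γ`. -/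
lemma block_sum_lt (hΓ : 0 < Γ) (he : 0 ≤ e) (heΓ : e ≤ Γ) {N k j : ℕ}
    (hτ : ((k * N : ℕ) : ℕ∞) < tauFin Γ e η) (hj : j < k) :
    ∑ i ∈ Finset.range N, η (j * N + i) < Γ := by
  have hne : ∀ i ≤ k * N, bufferProc Γ e η i ≠ Γ := tau_gt_iff.mp hτ
  have hle : (j + 1) * N ≤ k * N := Nat.mul_le_mul_right _ hj
  have h1 : bufferProc Γ e η (j * N) + ∑ i ∈ Finset.Ico (j * N) ((j+1) * N), η i ≤
      bufferProc Γ e η ((j+1) * N) := by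
    apply buf_ge_add_sum _ (Nat.mul_le_mul_right _ (Nat.le_succ j))
    intro m _ hm'
    exact hne m (hm'.trans hle)
  have h2 : ∑ i ∈ Finset.Ico (j * N) ((j+1) * N), η i = ∑ i ∈ Finset.range N, η (j * N + i) := by
    rw [Finset.sum_Ico_eq_sum_range]
    have hNN : (j+1) * N - j * N = N := by rw [Nat.succ_mul]; omega
    rw [hNN]
  have h3 : bufferProc Γ e η ((j+1) * N) < Γ :=
    lt_of_le_of_ne (buf_le heΓ _) (hne _ hle)
  have h0 : 0 ≤ bufferProc Γ e η (j * N) := buf_nonneg hΓ.le he _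
  rw [h2] at h1
  linarith
end Det

/-- Measurability of the buffer process as a function of the sample point. -/
lemma buf_meas {X : Type*} [MeasurableSpace X] (Γ e : ℝ) (g : ℕ → X → ℝ)
    (hg : ∀ n, Measurable (g n)) : ∀ m, Measurable (fun x => bufferProc Γ e (fun n => g n x) m)
  | 0 => measurable_const
  | m + 1 => by
      show Measurable (fun x => min Γ (max 0 (bufferProc Γ e (fun n => g n x) m + g m x)))
      exact measurable_const.min
        (measurable_const.max ((buf_meas Γ e g hg m).add (hg m)))

set_option maxHeartbeats 1000000 in
theorem stmt9 {Ω : Type*} [MeasurableSpace Ω] (P : Measure Ω) [IsProbabilityMeasure P]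
    (η : ℕ → Ω → ℝ) (hmeas : ∀ n, Measurable (η n))
    (hindep : iIndepFun η P)
    (hident : ∀ n, IdentDistrib (η n) (η 0) P P)
    (hint : Integrable (η 0) P) (hmean : 0 < ∫ ω, η 0 ω ∂P)
    (α : ℝ) (hα : 1 ≤ α)
    (hneg : Integrable (fun ω => (max (-(η 0 ω)) 0) ^ α) P)
    (Γ e : ℝ) (hΓ : 0 < Γ) (he0 : 0 ≤ e) (heΓ : e ≤ Γ) :
    ∫⁻ ω, ((tauFin Γ e (fun n => η n ω) : ℕ∞) : ℝ≥0∞) ^ α ∂P < ⊤ := by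
  classical
  -- Step 1: choose a truncation level `c` with positive truncated mean.
  obtain ⟨c₀, hc⟩ : ∃ n : ℕ, 0 < ∫ ω, min (η 0 ω) (n : ℝ) ∂P := by
    have hlim : Filter.Tendsto (fun n : ℕ => ∫ ω, min (η 0 ω) (n : ℝ) ∂P) Filter.atTop
        (nhds (∫ ω, η 0 ω ∂P)) := by
      apply MeasureTheory.tendsto_integral_of_dominated_convergence (fun ω => |η 0 ω|)
      · intro n; exact ((hmeas 0).min measurable_const).aestronglyMeasurable
      · exact hint.abs
      · intro n
        filter_upwards with ω
        rw [Real.norm_eq_abs]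
        rcases le_total (η 0 ω) (n : ℝ) with h | h
        · rw [min_eq_left h]
        · rw [min_eq_right h, abs_of_nonneg (by positivity)]
          exact h.trans (le_abs_self _)
      · filter_upwards with ω
        exact tendsto_atTop_of_eventually_const (i₀ := ⌈η 0 ω⌉₊)
          (fun n hn => min_eq_left ((Nat.le_ceil _).trans (Nat.cast_le.mpr hn)))
    exact (hlim.eventually (lt_mem_nhds hmean)).exists
  set c : ℝ := (c₀ : ℝ) with hc_def
  set ξ : ℕ → Ω → ℝ := fun n ω => min (η n ω) c with hξ_def
  set μ' : ℝ := ∫ ω, ξ 0 ω ∂P with hμ'_def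
  have hμ' : 0 < μ' := hc
  have hintn : ∀ n, Integrable (η n) P := fun n => (hident n).integrable_iff.mpr hint
  have hξmeas : ∀ n, Measurable (ξ n) := fun n => (hmeas n).min measurable_const
  have hξint : ∀ n, Integrable (ξ n) P := by
    intro n
    apply Integrable.mono' ((hintn n).abs.add (integrable_const |c|))
      (hξmeas n).aestronglyMeasurable
    filter_upwards with ω
    rw [Real.norm_eq_abs]
    show |min (η n ω) c| ≤ |η n ω| + |c|
    rcases le_total (η n ω) c with h | h
    · rw [min_eq_left h]; exact le_add_of_nonneg_right (abs_nonneg _)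
    · rw [min_eq_right h]; exact le_add_of_nonneg_left (abs_nonneg _)
  have hξeq : ∀ n, ∫ ω, ξ n ω ∂P = μ' := by
    intro n
    exact ((hident n).comp (measurable_id.min measurable_const)).integral_eq
  have hμ'lec : μ' ≤ c := by
    rw [hμ'_def]
    calc ∫ ω, ξ 0 ω ∂P ≤ ∫ _, c ∂P := by
          apply integral_mono (hξint 0) (integrable_const c)
          intro ω; exact min_le_right _ _
      _ = c := by simp
  have hc0 : 0 < c := lt_of_lt_of_le hμ' hμ'lec
  -- Step 2: choose a block length `N`.
  set N : ℕ := ⌈Γ / μ'⌉₊ + 1 with hN_def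
  have hN1 : 1 ≤ N := Nat.le_add_left 1 _
  have hNμ' : Γ < N * μ' := by
    rw [← div_lt_iff₀ hμ']  -- Γ/μ' < N
    calc Γ / μ' ≤ ⌈Γ / μ'⌉₊ := Nat.le_ceil _
      _ < N := by exact_mod_cast Nat.lt_succ_self _
  set δ : ℝ := (N * μ' - Γ) / (N * c) with hδ_def
  have hNc : 0 < (N : ℝ) * c := by positivity
  have hδ0 : 0 < δ := div_pos (by linarith) hNc
  have hδ1 : δ ≤ 1 := by
    rw [hδ_def, div_le_one hNc]
    have : (N : ℝ) * μ' ≤ N * c := by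
      apply mul_le_mul_of_nonneg_left hμ'lec (by positivity)
    linarith
  set q : ℝ := 1 - δ with hq_def
  have hq0 : 0 ≤ q := by linarith
  have hq1 : q < 1 := by linarith
  -- Step 3: each block event has probability at most `q`.
  have hblock : ∀ k : ℕ,
      P {ω | ∑ i ∈ Finset.range N, η (k * N + i) ω < Γ} ≤ ENNReal.ofReal q := by
    intro k
    set S' : Ω → ℝ := fun ω => ∑ i ∈ Finset.range N, ξ (k * N + i) ω with hS'_def
    have hS'meas : Measurable S' := Finset.measurable_sum _ (fun i _ => hξmeas _)
    have hS'int : Integrable S' P := integrable_finset_sum _ (fun i _ => hξint _)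
    have hES' : ∫ ω, S' ω ∂P = N * μ' := by
      rw [hS'_def]
      rw [integral_finset_sum _ (fun i _ => hξint _)]
      simp [hξeq, mul_comm]
    set A' : Set Ω := {ω | S' ω < Γ} with hA'_def
    have hA'meas : MeasurableSet A' := hS'meas measurableSet_Iio
    have hsub : {ω | ∑ i ∈ Finset.range N, η (k * N + i) ω < Γ} ⊆ A' := by
      intro ω hω
      have h : S' ω ≤ ∑ i ∈ Finset.range N, η (k * N + i) ω :=
        Finset.sum_le_sum (fun i _ => min_le_left _ _)
      exact lt_of_le_of_lt h hω
    have h1 : ∫ ω in A', S' ω ∂P ≤ Γ := by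
      calc ∫ ω in A', S' ω ∂P ≤ ∫ _ in A', Γ ∂P := by
            apply setIntegral_mono_on hS'int.integrableOn (integrableOn_const
              (measure_ne_top _ _)) hA'meas
            exact fun x hx => le_of_lt hx
        _ = (P A').toReal • Γ := by rw [setIntegral_const]; rfl
        _ ≤ 1 * Γ := by
            rw [smul_eq_mul]
            apply mul_le_mul_of_nonneg_right _ hΓ.le
            exact ENNReal.toReal_le_of_le_ofReal one_pos.le (by simpa using prob_le_one)
        _ = Γ := one_mul Γ
    have h2 : ∫ ω in A'ᶜ, S' ω ∂P ≤ (P A'ᶜ).toReal * ((N : ℝ) * c) := by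
      calc ∫ ω in A'ᶜ, S' ω ∂P ≤ ∫ _ in A'ᶜ, ((N : ℝ) * c) ∂P := by
            apply setIntegral_mono_on hS'int.integrableOn (integrableOn_const
              (measure_ne_top _ _)) hA'meas.compl
            intro x _
            calc S' x ≤ ∑ _i ∈ Finset.range N, c :=
                  Finset.sum_le_sum (fun i _ => min_le_right _ _)
              _ = (N : ℝ) * c := by simp [mul_comm]
        _ = (P A'ᶜ).toReal • ((N : ℝ) * c) := by rw [setIntegral_const]; rfl
        _ = (P A'ᶜ).toReal * ((N : ℝ) * c) := by rw [smul_eq_mul]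
    have hsplit : ∫ ω in A', S' ω ∂P + ∫ ω in A'ᶜ, S' ω ∂P = (N : ℝ) * μ' := by
      rw [integral_add_compl hA'meas hS'int, hES']
    have hPc : δ ≤ (P A'ᶜ).toReal := by
      rw [hδ_def, div_le_iff₀ hNc]
      nlinarith [hsplit, h1, h2]
    have hPc' : ENNReal.ofReal δ ≤ P A'ᶜ := by
      rw [← ENNReal.ofReal_toReal (measure_ne_top P A'ᶜ)]
      exact ENNReal.ofReal_le_ofReal hPc
    calc P {ω | ∑ i ∈ Finset.range N, η (k * N + i) ω < Γ} ≤ P A' := measure_mono hsub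
      _ = 1 - P A'ᶜ := by
          have h3 := prob_compl_eq_one_sub (μ := P) hA'meas.compl
          rwa [compl_compl] at h3
      _ ≤ 1 - ENNReal.ofReal δ := tsub_le_tsub_left hPc' 1
      _ = ENNReal.ofReal q := by
          rw [hq_def, ENNReal.ofReal_sub _ hδ0.le, ENNReal.ofReal_one]
  -- Step 4: tail bound by induction using independence.
  set Bset : ℕ → Set Ω :=
    fun k => {ω | ((k * N : ℕ) : ℕ∞) < tauFin Γ e (fun n => η n ω)} with hBset_def
  have hBeq : ∀ k : ℕ, Bset k =
      ⋂ m ∈ Set.Iic (k * N), {ω | bufferProc Γ e (fun n => η n ω) m ≠ Γ} := by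
    intro k; ext ω
    simp only [hBset_def, Set.mem_setOf_eq, Set.mem_iInter, Set.mem_Iic, tau_gt_iff]
  have hBmeas : ∀ k, MeasurableSet (Bset k) := by
    intro k
    rw [hBeq]
    apply MeasurableSet.biInter (Set.to_countable _)
    intro m _
    exact (buf_meas Γ e η hmeas m) (measurableSet_singleton Γ).compl
  have hindstep : ∀ k, P (Bset (k+1)) ≤ P (Bset k) * ENNReal.ofReal q := by
    intro k
    set A : Set Ω := {ω | ∑ i ∈ Finset.range N, η (k * N + i) ω < Γ} with hA_def
    have hincl : Bset (k+1) ⊆ Bset k ∩ A := by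
      intro ω hω
      have hω' : (((k+1) * N : ℕ) : ℕ∞) < tauFin Γ e (fun n => η n ω) := hω
      refine ⟨?_, ?_⟩
      · show ((k * N : ℕ) : ℕ∞) < tauFin Γ e (fun n => η n ω)
        exact lt_of_le_of_lt (Nat.cast_le.mpr (Nat.mul_le_mul_right N (Nat.le_succ k))) hω'
      · exact block_sum_lt hΓ he0 heΓ hω' (Nat.lt_succ_self k)
    have hip : P (Bset k ∩ A) = P (Bset k) * P A := by
      set S : Finset ℕ := Finset.range (k * N) with hS_def
      set T : Finset ℕ := Finset.Ico (k * N) (k * N + N) with hT_def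
      have hST : Disjoint S T := by
        rw [Finset.disjoint_left]
        intro a haS haT
        rw [hS_def, Finset.mem_range] at haS
        rw [hT_def, Finset.mem_Ico] at haT
        omega
      have H := hindep.indepFun_finset S T hST hmeas
      have hg2 : Measurable (fun v : (i : T) → ℝ => ∑ i : T, v i) :=
        Finset.measurable_sum Finset.univ (fun i _ => measurable_pi_apply i)
      set ext : ((i : S) → ℝ) → ℕ → ℝ := fun v n => if h : n ∈ S then v ⟨n, h⟩ else 0
        with hext_def
      have hextm : ∀ n, Measurable (fun v : (i : S) → ℝ => ext v n) := by
        intro n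
        by_cases h : n ∈ S
        · simp only [hext_def, dif_pos h]; exact measurable_pi_apply _
        · simp only [hext_def, dif_neg h]; exact measurable_const
      set U : Set ((i : S) → ℝ) :=
        ⋂ m ∈ Set.Iic (k * N), {v | bufferProc Γ e (ext v) m ≠ Γ} with hU_def
      have hU : MeasurableSet U := MeasurableSet.biInter (Set.to_countable _) (fun m _ =>
        (buf_meas Γ e (fun n v => ext v n) hextm m) (measurableSet_singleton Γ).compl)
      have hBF : Bset k = (fun ω (i : S) => η i ω) ⁻¹' U := by
        ext ω
        rw [hBeq]
        simp only [Set.mem_iInter, Set.mem_setOf_eq, Set.mem_preimage, hU_def, Set.mem_Iic]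
        have hcongr : ∀ m ≤ k * N,
            bufferProc Γ e (ext (fun i : S => η i ω)) m
              = bufferProc Γ e (fun n => η n ω) m := by
          intro m hm
          apply buf_congr
          intro i hi
          have hiS : i ∈ S := by rw [hS_def, Finset.mem_range]; omega
          simp only [hext_def, dif_pos hiS]
        constructor
        · intro h m hm; rw [hcongr m hm]; exact h m hm
        · intro h m hm; rw [← hcongr m hm]; exact h m hm
      have hAeq : A = (fun ω => ∑ i : T, η i ω) ⁻¹' (Set.Iio Γ) := by
        ext ω
        simp only [hA_def, Set.mem_setOf_eq, Set.mem_preimage, Set.mem_Iio]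
        have hsum : ∑ i : T, η i ω = ∑ i ∈ Finset.range N, η (k * N + i) ω := by
          rw [Finset.sum_coe_sort (f := fun i => η i ω), hT_def,
            Finset.sum_Ico_eq_sum_range]
          simp
        rw [hsum]
      have H2 := H.comp measurable_id hg2
      rw [hBF, hAeq]
      exact H2.measure_inter_preimage_eq_mul U (Set.Iio Γ) hU measurableSet_Iio
    calc P (Bset (k+1)) ≤ P (Bset k ∩ A) := measure_mono hincl
      _ = P (Bset k) * P A := hip
      _ ≤ P (Bset k) * ENNReal.ofReal q := mul_le_mul_right (hblock k) _
  have htail : ∀ k, P (Bset k) ≤ (ENNReal.ofReal q) ^ k := by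
    intro k
    induction k with
    | zero => simpa using prob_le_one
    | succ k ih =>
      calc P (Bset (k+1)) ≤ P (Bset k) * ENNReal.ofReal q := hindstep k
        _ ≤ (ENNReal.ofReal q) ^ k * ENNReal.ofReal q := mul_le_mul_left ih _
        _ = (ENNReal.ofReal q) ^ (k+1) := (pow_succ _ _).symm
  -- Step 5: final computation.
  set Q : ℝ≥0∞ := ENNReal.ofReal q with hQ_def
  have hQ1 : Q < 1 := by
    rw [hQ_def, ← ENNReal.ofReal_one]
    exact (ENNReal.ofReal_lt_ofReal_iff one_pos).mpr hq1
  set D : ℕ → Set Ω := fun k => Bset k \ Bset (k+1) with hD_def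
  have hDmeas : ∀ k, MeasurableSet (D k) := fun k => (hBmeas k).diff (hBmeas (k+1))
  set Tinf : Set Ω := ⋂ k, Bset k with hTinf_def
  have hTmeas : MeasurableSet Tinf := MeasurableSet.iInter hBmeas
  have hT0 : P Tinf = 0 := by
    have hle : ∀ k, P Tinf ≤ Q ^ k :=
      fun k => (measure_mono (Set.iInter_subset _ k)).trans (htail k)
    have hto : Filter.Tendsto (fun k : ℕ => Q ^ k) Filter.atTop (nhds 0) :=
      ENNReal.tendsto_pow_atTop_nhds_zero_of_lt_one hQ1
    have : P Tinf ≤ 0 := ge_of_tendsto' hto hle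
    exact le_antisymm this zero_le
  set cc : ℕ → ℝ≥0∞ := fun k => ((((k+1) * N : ℕ) : ℝ≥0∞)) ^ α with hcc_def
  set g : Ω → ℝ≥0∞ := fun ω =>
    (∑' k, cc k * Set.indicator (D k) (1 : Ω → ℝ≥0∞) ω)
      + ⊤ * Set.indicator Tinf (1 : Ω → ℝ≥0∞) ω with hg_def
  have hfg : ∀ ω, ((tauFin Γ e (fun n => η n ω) : ℕ∞) : ℝ≥0∞) ^ α ≤ g ω := by
    intro ω
    by_cases hT : ω ∈ Tinf
    · have : g ω = ⊤ := by
        rw [hg_def]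
        simp [Set.indicator_of_mem hT]
      rw [this]; exact le_top
    · have hex : ∃ k, ω ∉ Bset k := by
        simpa [hTinf_def, Set.mem_iInter] using hT
      set k₀ := Nat.find hex with hk₀_def
      have hk₀ : ω ∉ Bset k₀ := Nat.find_spec hex
      have hτle : tauFin Γ e (fun n => η n ω) ≤ ((k₀ * N : ℕ) : ℕ∞) := not_lt.mp hk₀
      rcases Nat.eq_zero_or_pos k₀ with h0 | hpos
      · rw [h0] at hτle
        have hτ0 : tauFin Γ e (fun n => η n ω) = 0 :=
          le_antisymm (by simpa using hτle) zero_le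
        rw [hτ0]
        rw [show (((0 : ℕ∞) : ℝ≥0∞)) = 0 by simp]
        rw [ENNReal.zero_rpow_of_pos (lt_of_lt_of_le one_pos hα)]
        exact zero_le
      · obtain ⟨k, hkk⟩ : ∃ k, k₀ = k + 1 := ⟨k₀ - 1, by omega⟩
        have hmem : ω ∈ Bset k := by
          by_contra h
          exact Nat.find_min hex (by omega : k < k₀) h
        have hDk : ω ∈ D k := ⟨hmem, by rw [← hkk]; exact hk₀⟩
        have hb : ((tauFin Γ e (fun n => η n ω) : ℕ∞) : ℝ≥0∞) ^ α ≤ cc k := by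
          apply ENNReal.rpow_le_rpow _ (le_trans zero_le_one hα)
          rw [hkk] at hτle
          calc ((tauFin Γ e (fun n => η n ω) : ℕ∞) : ℝ≥0∞)
              ≤ ((((k+1) * N : ℕ) : ℕ∞) : ℝ≥0∞) := by
                exact_mod_cast ENat.toENNReal_le.mpr hτle
            _ = (((k+1) * N : ℕ) : ℝ≥0∞) := by simp
        calc ((tauFin Γ e (fun n => η n ω) : ℕ∞) : ℝ≥0∞) ^ α ≤ cc k := hb
          _ = cc k * Set.indicator (D k) (1 : Ω → ℝ≥0∞) ω := by
              rw [Set.indicator_of_mem hDk]; simp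
          _ ≤ ∑' k, cc k * Set.indicator (D k) (1 : Ω → ℝ≥0∞) ω :=
              ENNReal.le_tsum k
          _ ≤ g ω := le_self_add
  have hsummeas : ∀ k, Measurable
      (fun ω => cc k * Set.indicator (D k) (1 : Ω → ℝ≥0∞) ω) :=
    fun k => measurable_const.mul (measurable_one.indicator (hDmeas k))
  have hglint : ∫⁻ ω, g ω ∂P ≤ ∑' k, cc k * Q ^ k := by
    rw [hg_def]
    rw [lintegral_add_left (Measurable.ennreal_tsum hsummeas)]
    have h2 : ∫⁻ ω, ⊤ * Set.indicator Tinf (1 : Ω → ℝ≥0∞) ω ∂P = 0 := by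
      rw [lintegral_const_mul _ (measurable_one.indicator hTmeas),
        lintegral_indicator_one hTmeas, hT0, mul_zero]
    rw [h2, add_zero]
    rw [lintegral_tsum (fun k => (hsummeas k).aemeasurable)]
    apply ENNReal.tsum_le_tsum
    intro k
    rw [lintegral_const_mul _ (measurable_one.indicator (hDmeas k)),
      lintegral_indicator_one (hDmeas k)]
    exact mul_le_mul_right ((measure_mono Set.diff_subset).trans (htail k)) _
  have hsum : (∑' k, cc k * Q ^ k) < ⊤ := by
    set r : ℝ := max q (1/2) with hr_def
    have hr0 : 0 < r := lt_of_lt_of_le one_half_pos (le_max_right _ _)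
    have hr1 : r < 1 := max_lt hq1 one_half_lt_one
    set m : ℕ := ⌈α⌉₊ with hm_def
    have hterm : ∀ k, cc k * Q ^ k
        ≤ ENNReal.ofReal (((((k+1) * N : ℕ) : ℝ)) ^ m * r ^ k) := by
      intro k
      have h1 : cc k = ENNReal.ofReal (((((k+1) * N : ℕ)) : ℝ) ^ α) := by
        show ((((k+1) * N : ℕ) : ℝ≥0∞)) ^ α = _
        rw [← ENNReal.ofReal_natCast ((k+1) * N),
          ENNReal.ofReal_rpow_of_nonneg (Nat.cast_nonneg _) (by linarith)]
      have h2 : Q ^ k = ENNReal.ofReal (q ^ k) := by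
        rw [hQ_def, ENNReal.ofReal_pow hq0]
      rw [h1, h2, ← ENNReal.ofReal_mul (by positivity)]
      apply ENNReal.ofReal_le_ofReal
      have hbase : (1 : ℝ) ≤ (((k+1) * N : ℕ) : ℝ) := by
        have : 1 ≤ (k+1) * N := Nat.one_le_iff_ne_zero.mpr (by positivity)
        exact_mod_cast this
      have hxa : ((((k+1) * N : ℕ)) : ℝ) ^ α ≤ ((((k+1) * N : ℕ)) : ℝ) ^ m := by
        calc ((((k+1) * N : ℕ)) : ℝ) ^ α ≤ ((((k+1) * N : ℕ)) : ℝ) ^ (m : ℝ) :=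
              Real.rpow_le_rpow_of_exponent_le hbase (Nat.le_ceil α)
          _ = ((((k+1) * N : ℕ)) : ℝ) ^ m := Real.rpow_natCast _ m
      have hqr : q ^ k ≤ r ^ k := pow_le_pow_left₀ hq0 (le_max_left _ _) k
      have h3 : (0:ℝ) ≤ ((((k+1) * N : ℕ)) : ℝ) ^ α := by positivity
      exact mul_le_mul hxa hqr (pow_nonneg hq0 k) (by positivity)
    have hs : Summable (fun k => ((((k+1) * N : ℕ) : ℝ)) ^ m * r ^ k) := by
      have hw : Summable (fun k : ℕ => (k : ℝ) ^ m * r ^ k) := by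
        apply summable_pow_mul_geometric_of_norm_lt_one
        rw [Real.norm_eq_abs, abs_of_pos hr0]; exact hr1
      have hw1 : Summable (fun k : ℕ => ((k + 1 : ℕ) : ℝ) ^ m * r ^ (k + 1)) :=
        (summable_nat_add_iff 1).mpr hw
      have hw2 := hw1.mul_left (r⁻¹ * (N : ℝ) ^ m)
      apply Summable.of_nonneg_of_le (fun k => by positivity) (fun k => ?_) hw2
      have heq : ((((k+1) * N : ℕ)) : ℝ) ^ m = ((k + 1 : ℕ) : ℝ) ^ m * (N : ℝ) ^ m := by
        rw [Nat.cast_mul, mul_pow]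
      rw [heq, pow_succ]
      rw [show r⁻¹ * (N:ℝ)^m * (((k + 1 : ℕ) : ℝ) ^ m * (r ^ k * r))
          = (r * r⁻¹) * (((k + 1 : ℕ) : ℝ) ^ m * (N:ℝ)^m * r ^ k) by ring]
      rw [mul_inv_cancel₀ (ne_of_gt hr0), one_mul]
    calc (∑' k, cc k * Q ^ k)
        ≤ ∑' k, ENNReal.ofReal (((((k+1) * N : ℕ) : ℝ)) ^ m * r ^ k) :=
          ENNReal.tsum_le_tsum hterm
      _ = ENNReal.ofReal (∑' k, ((((k+1) * N : ℕ) : ℝ)) ^ m * r ^ k) :=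
          (ENNReal.ofReal_tsum_of_nonneg (fun k => by positivity) hs).symm
      _ < ⊤ := ENNReal.ofReal_lt_top
  calc ∫⁻ ω, ((tauFin Γ e (fun n => η n ω) : ℕ∞) : ℝ≥0∞) ^ α ∂P
      ≤ ∫⁻ ω, g ω ∂P := lintegral_mono hfg
    _ ≤ ∑' k, cc k * Q ^ k := hglint
    _ < ⊤ := hsum
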